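/- Let n ≥ 2 and let α be an element of the Higman–Thompson group T_n of finite order (α^m = 1 for some integer m ≥ 1). If α fixes some point of the circle S¹ = ℝ/ℤ, then α is the identity. -/

import Mathlib

noncomputable section

/-- The circle `S¹ = ℝ/ℤ`. -/
abbrev Circle1 := AddCircle (1 : ℝ)

/-- The group of self-homeomorphisms of a space, with `(f * g) x = f (g x)`. -/
instance {X : Type*} [TopologicalSpace X] : Group (X ≃ₜ X) where
  mul f g := g.trans f
  one := Homeomorph.refl _
  inv := Homeomorph.symm
  mul_assoc _ _ _ := Homeomorph.ext fun _ => rfl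
  one_mul _ := Homeomorph.ext fun _ => rfl
  mul_one _ := Homeomorph.ext fun _ => rfl
  inv_mul_cancel f := Homeomorph.ext f.symm_apply_apply

/-- `x` lies in `ℤ[1/n]`. -/
def IsNAdicRational (n : ℕ) (x : ℝ) : Prop := ∃ (a : ℤ) (k : ℕ), x = (a : ℝ) / (n : ℝ) ^ k

/-- `F : ℝ → ℝ` is piecewise linear on `[0,1]` with slopes integer powers of `n` and
breakpoints in `ℤ[1/n]`. -/
def IsPiecewiseLinearN (n : ℕ) (F : ℝ → ℝ) : Prop :=
  ∃ (k : ℕ) (x : ℕ → ℝ), 0 < k ∧ x 0 = 0 ∧ x k = 1 ∧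
    (∀ i < k, x i < x (i + 1)) ∧
    (∀ i ≤ k, IsNAdicRational n (x i)) ∧
    (∀ i < k, ∃ (m : ℤ) (c : ℝ), ∀ t ∈ Set.Icc (x i) (x (i + 1)),
      F t = (n : ℝ) ^ m * t + c)

/-- Membership in the Higman–Thompson group `T_n`, viewed as a group of
orientation-preserving self-homeomorphisms of `ℝ/ℤ`: `f` lifts to a strictly increasing
homeomorphism `F` of `ℝ` commuting with translation by `1`, which is piecewise linear with
slopes powers of `n` and breakpoints in `ℤ[1/n]`. -/
def TnMem (n : ℕ) (f : Circle1 ≃ₜ Circle1) : Prop :=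
  ∃ F : ℝ ≃ₜ ℝ, StrictMono F ∧ (∀ t : ℝ, F (t + 1) = F t + 1) ∧
    (∀ t : ℝ, f ((t : ℝ) : Circle1) = ((F t : ℝ) : Circle1)) ∧
    IsPiecewiseLinearN n F


/-- A finite order element of `T_n` fixing a point of the circle is the identity. -/
theorem finite_order_elt_of_Tn_with_fixed_point_is_one (n : ℕ) (hn : 2 ≤ n)
    (α : Circle1 ≃ₜ Circle1) (hα : TnMem n α)
    (m : ℕ) (hm : 1 ≤ m) (hord : α ^ m = 1)
    (hfix : ∃ x : Circle1, α x = x) :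
    α = 1 := by
  obtain ⟨F, hFmono, hper, hlift, -⟩ := hα
  -- equality in the circle
  have coe_iff : ∀ a b : ℝ, ((a : ℝ) : Circle1) = (b : Circle1) ↔ ∃ z : ℤ, a = b + z := by
    intro a b
    constructor
    · intro h
      obtain ⟨z, hz⟩ := AddSubgroup.mem_zmultiples_iff.mp (QuotientAddGroup.eq.mp h)
      refine ⟨-z, ?_⟩
      have : (z : ℝ) * 1 = -a + b := by exact_mod_cast (by simpa [zsmul_eq_mul] using hz)
      push_cast
      linarith
    · rintro ⟨z, rfl⟩
      refine (QuotientAddGroup.eq).mpr (AddSubgroup.mem_zmultiples_iff.mpr ⟨-z, ?_⟩)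
      rw [zsmul_eq_mul]
      push_cast
      ring
  have hper' : ∀ t : ℝ, F (t - 1) = F t - 1 := by
    intro t
    have := hper (t - 1)
    rw [sub_add_cancel] at this
    linarith
  have hperZ : ∀ (z : ℤ) (t : ℝ), F (t + z) = F t + z := by
    intro z
    induction z using Int.induction_on with
    | zero => simp
    | succ i ih =>
      intro t
      have ih' := ih t
      push_cast at ih' ⊢
      rw [← add_assoc, hper (t + i), ih']
      ring
    | pred i ih =>
      intro t
      push_cast
      rw [show t + (-(i : ℝ) - 1) = (t + -(i : ℝ)) - 1 by ring, hper']
      have := ih t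
      push_cast at this
      rw [this]
      ring
  obtain ⟨x, hx⟩ := hfix
  obtain ⟨t₀, rfl⟩ := QuotientAddGroup.mk_surjective x
  have hx' : ((F t₀ : ℝ) : Circle1) = (t₀ : Circle1) := by rw [← hlift]; exact hx
  obtain ⟨k, hk⟩ := (coe_iff _ _).mp hx'
  set G : ℝ → ℝ := fun t => F t - (k : ℝ) with hGdef
  have hG0 : G t₀ = t₀ := by simp [hGdef, hk]
  have hG1 : G (t₀ + 1) = t₀ + 1 := by simp [hGdef, hper t₀, hk]; ring
  have hGmono : StrictMono G := fun a b hab => by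
    simpa [hGdef] using hFmono hab
  have hGIoo : ∀ t ∈ Set.Ioo t₀ (t₀ + 1), G t ∈ Set.Ioo t₀ (t₀ + 1) := by
    rintro t ⟨h1, h2⟩
    exact ⟨hG0 ▸ hGmono h1, hG1 ▸ hGmono h2⟩
  -- iterates of α are lifted by iterates of F
  have hiter : ∀ (j : ℕ) (t : ℝ), (α ^ j) ((t : ℝ) : Circle1) = ((F^[j] t : ℝ) : Circle1) := by
    intro j
    induction j with
    | zero => intro t; rfl
    | succ j ih =>
      intro t
      rw [pow_succ]
      have h1 : (α ^ j * α) ((t : ℝ) : Circle1) = (α ^ j) (α ((t : ℝ) : Circle1)) := rfl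
      rw [h1, hlift, ih, Function.iterate_succ_apply]
  have hFm : ∀ t : ℝ, ∃ z : ℤ, F^[m] t = t + z := by
    intro t
    refine (coe_iff _ _).mp ?_
    rw [← hiter m t, hord]
    rfl
  have hGiter : ∀ (j : ℕ) (t : ℝ), G^[j] t = F^[j] t - (j : ℝ) * (k : ℝ) := by
    intro j
    induction j with
    | zero => intro t; simp
    | succ j ih =>
      intro t
      rw [Function.iterate_succ_apply', ih]
      have h2 := hperZ (-(j : ℤ) * k) (F^[j] t)
      push_cast at h2
      simp only [hGdef]
      rw [show F^[j] t - (j : ℝ) * (k : ℝ) = F^[j] t + -(j : ℝ) * (k : ℝ) by ring, h2,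
        Function.iterate_succ_apply']
      push_cast
      ring
  -- G = id on (t₀, t₀+1)
  have hGfix : ∀ t ∈ Set.Ioo t₀ (t₀ + 1), G t = t := by
    intro t ht
    have hIooIter : ∀ j : ℕ, G^[j] t ∈ Set.Ioo t₀ (t₀ + 1) := by
      intro j
      induction j with
      | zero => simpa using ht
      | succ j ih => rw [Function.iterate_succ_apply']; exact hGIoo _ ih
    obtain ⟨z, hz⟩ := hFm t
    have hGm : G^[m] t = t + ((z : ℝ) - (m : ℝ) * (k : ℝ)) := by
      rw [hGiter m t, hz]; ring
    have hmem := hIooIter m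
    have habs : |(z - (m : ℤ) * k : ℤ)| < 1 := by
      have h1 : |((z - (m : ℤ) * k : ℤ) : ℝ)| < 1 := by
        rw [hGm] at hmem
        obtain ⟨ha, hb⟩ := hmem
        obtain ⟨hc, hd⟩ := ht
        rw [abs_lt]
        push_cast
        constructor <;> linarith
      exact_mod_cast h1
    have hz0 : (z - (m : ℤ) * k : ℤ) = 0 := Int.abs_lt_one_iff.mp habs
    have hGmId : G^[m] t = t := by
      rw [hGm]
      have : (z : ℝ) - (m : ℝ) * (k : ℝ) = 0 := by exact_mod_cast hz0
      rw [this]; ring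
    rcases lt_trichotomy (G t) t with h | h | h
    · have hanti : StrictAnti fun j : ℕ => G^[j] t := by
        refine strictAnti_nat_of_succ_lt fun j => ?_
        rw [Function.iterate_succ_apply]
        exact (hGmono.iterate j) h
      have := hanti (show 0 < m from hm)
      simp only [Function.iterate_zero_apply] at this
      rw [hGmId] at this
      exact absurd this (lt_irrefl t)
    · exact h
    · have hmono : StrictMono fun j : ℕ => G^[j] t := by
        refine strictMono_nat_of_lt_succ fun j => ?_
        rw [Function.iterate_succ_apply]
        exact (hGmono.iterate j) h
      have := hmono (show 0 < m from hm)
      simp only [Function.iterate_zero_apply] at this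
      rw [hGmId] at this
      exact absurd this (lt_irrefl t)
  have key : ∀ s ∈ Set.Ico t₀ (t₀ + 1), F s = s + k := by
    rintro s ⟨h1, h2⟩
    rcases eq_or_lt_of_le h1 with h | h
    · rw [← h]; exact hk
    · have := hGfix s ⟨h, h2⟩
      simp only [hGdef] at this
      linarith
  refine Homeomorph.ext fun y => ?_
  obtain ⟨s, rfl⟩ := QuotientAddGroup.mk_surjective y
  set s' : ℝ := s - ⌊s - t₀⌋ with hs'
  have hcoe : ((s' : ℝ) : Circle1) = (s : Circle1) := (coe_iff _ _).mpr ⟨-⌊s - t₀⌋, by push_cast; ring⟩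
  have hs'mem : s' ∈ Set.Ico t₀ (t₀ + 1) := by
    constructor
    · have := Int.floor_le (s - t₀); simp only [hs']; linarith
    · have := Int.lt_floor_add_one (s - t₀); simp only [hs']; linarith
  have h1x : (1 : Circle1 ≃ₜ Circle1) ((s : ℝ) : Circle1) = ((s : ℝ) : Circle1) := rfl
  calc α ((s : ℝ) : Circle1) = α ((s' : ℝ) : Circle1) := by rw [hcoe]
    _ = ((F s' : ℝ) : Circle1) := hlift s'
    _ = ((s' : ℝ) : Circle1) := by
        rw [key s' hs'mem]
        exact (coe_iff _ _).mpr ⟨k, rfl⟩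
    _ = ((s : ℝ) : Circle1) := hcoe
    _ = (1 : Circle1 ≃ₜ Circle1) ((s : ℝ) : Circle1) := h1x.symm
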